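/- arXiv:1311.0501 — 6 statements merged into one kernel-verified Lean document; each statement's English description precedes it below -/
import Mathlib

section
/- If σ is a non-decreasing function on [0, Λ] with moments b_k and ξ_0,…,ξ_r (r ≤ m−1) are complex numbers such that Σ_{j,k=0}^r b_{j+k} ξ_k conj(ξ_j) = 0, then Σ_{j,k=0}^r b_{j+k+2} ξ_k conj(ξ_j) = 0. -/
open MeasureTheory

private lemma key_sum (Λ : ℝ) (σ : StieltjesFunction ℝ) (r c : ℕ) (ξ : Fin (r + 1) → ℂ) :
    ∑ j : Fin (r + 1), ∑ k : Fin (r + 1),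
      ((∫ t in Set.Icc (0:ℝ) Λ, t ^ ((j : ℕ) + (k : ℕ) + c) ∂σ.measure : ℝ) : ℂ)
        * ξ k * starRingEnd ℂ (ξ j)
    = ((∫ t in Set.Icc (0:ℝ) Λ,
        t ^ c * ‖∑ k : Fin (r + 1), ξ k * (t : ℂ) ^ (k : ℕ)‖ ^ 2 ∂σ.measure : ℝ) : ℂ) := by
  have hint : ∀ (j k : Fin (r + 1)),
      IntegrableOn (fun t : ℝ => ((t : ℂ)) ^ ((j : ℕ) + (k : ℕ) + c) * ξ k * starRingEnd ℂ (ξ j))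
        (Set.Icc (0:ℝ) Λ) σ.measure := by
    intro j k
    exact (Continuous.mul (Continuous.mul (by continuity) continuous_const)
      continuous_const).integrableOn_Icc
  have step1 : ∀ (j k : Fin (r + 1)),
      ((∫ t in Set.Icc (0:ℝ) Λ, t ^ ((j : ℕ) + (k : ℕ) + c) ∂σ.measure : ℝ) : ℂ)
        * ξ k * starRingEnd ℂ (ξ j)
      = ∫ t in Set.Icc (0:ℝ) Λ,
          ((t : ℂ)) ^ ((j : ℕ) + (k : ℕ) + c) * ξ k * starRingEnd ℂ (ξ j) ∂σ.measure := by
    intro j k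
    symm
    rw [integral_mul_const, integral_mul_const]
    norm_cast
  calc ∑ j : Fin (r + 1), ∑ k : Fin (r + 1),
        ((∫ t in Set.Icc (0:ℝ) Λ, t ^ ((j : ℕ) + (k : ℕ) + c) ∂σ.measure : ℝ) : ℂ)
          * ξ k * starRingEnd ℂ (ξ j)
      = ∑ j : Fin (r + 1), ∑ k : Fin (r + 1), ∫ t in Set.Icc (0:ℝ) Λ,
          ((t : ℂ)) ^ ((j : ℕ) + (k : ℕ) + c) * ξ k * starRingEnd ℂ (ξ j) ∂σ.measure := by
        simp_rw [step1]
    _ = ∫ t in Set.Icc (0:ℝ) Λ, ∑ j : Fin (r + 1), ∑ k : Fin (r + 1),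
          ((t : ℂ)) ^ ((j : ℕ) + (k : ℕ) + c) * ξ k * starRingEnd ℂ (ξ j) ∂σ.measure := by
        symm
        rw [integral_finset_sum _ (fun j _ => integrable_finset_sum _ (fun k _ => hint j k))]
        exact Finset.sum_congr rfl fun j _ => integral_finset_sum _ (fun k _ => hint j k)
    _ = ((∫ t in Set.Icc (0:ℝ) Λ,
          t ^ c * ‖∑ k : Fin (r + 1), ξ k * (t : ℂ) ^ (k : ℕ)‖ ^ 2 ∂σ.measure : ℝ) : ℂ) := by
        have hnorm : ∀ z : ℂ, ((‖z‖ ^ 2 : ℝ) : ℂ) = z * starRingEnd ℂ z := by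
          intro z
          rw [Complex.mul_conj]
          norm_cast
          exact ((Complex.normSq_eq_norm_sq z).symm ▸ rfl)
        have hfun : ∀ t : ℝ, ∑ j : Fin (r + 1), ∑ k : Fin (r + 1),
            ((t : ℂ)) ^ ((j : ℕ) + (k : ℕ) + c) * ξ k * starRingEnd ℂ (ξ j)
            = (((t ^ c * ‖∑ k : Fin (r + 1), ξ k * (t : ℂ) ^ (k : ℕ)‖ ^ 2 : ℝ)) : ℂ) := by
          intro t
          rw [Complex.ofReal_mul, hnorm, Complex.ofReal_pow, map_sum, Finset.sum_mul_sum, Finset.mul_sum, Finset.sum_comm]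
          refine Finset.sum_congr rfl (fun j _ => ?_)
          rw [Finset.mul_sum]
          refine Finset.sum_congr rfl (fun k _ => ?_)
          rw [map_mul, map_pow, Complex.conj_ofReal]
          ring
        simp_rw [hfun]
        exact integral_ofReal

theorem stmt3 (Λ : ℝ) (hΛ : 0 < Λ) (m : ℕ) (hm : 1 ≤ m) (σ : StieltjesFunction ℝ)
    (b : ℕ → ℝ)
    (hb : ∀ k ≤ 2 * m, b k = ∫ t in Set.Icc (0:ℝ) Λ, t ^ k ∂σ.measure)
    (r : ℕ) (hr : r + 1 ≤ m) (ξ : Fin (r + 1) → ℂ)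
    (h : ∑ j : Fin (r + 1), ∑ k : Fin (r + 1),
        (b ((j : ℕ) + (k : ℕ)) : ℂ) * ξ k * starRingEnd ℂ (ξ j) = 0) :
    ∑ j : Fin (r + 1), ∑ k : Fin (r + 1),
        (b ((j : ℕ) + (k : ℕ) + 2) : ℂ) * ξ k * starRingEnd ℂ (ξ j) = 0 := by
  set p : ℝ → ℝ := fun t => ‖∑ k : Fin (r + 1), ξ k * (t : ℂ) ^ (k : ℕ)‖ ^ 2 with hp
  have hbound : ∀ (j k : Fin (r + 1)) (c : ℕ), c ≤ 2 → (j : ℕ) + (k : ℕ) + c ≤ 2 * m := by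
    intro j k c hc
    have hj : (j : ℕ) ≤ r := Nat.lt_succ_iff.mp j.isLt
    have hk : (k : ℕ) ≤ r := Nat.lt_succ_iff.mp k.isLt
    omega
  -- rewrite both sums via key_sum
  have h0 : ∑ j : Fin (r + 1), ∑ k : Fin (r + 1),
      (b ((j : ℕ) + (k : ℕ)) : ℂ) * ξ k * starRingEnd ℂ (ξ j)
      = ((∫ t in Set.Icc (0:ℝ) Λ, t ^ 0 * p t ∂σ.measure : ℝ) : ℂ) := by
    rw [← key_sum Λ σ r 0 ξ]
    refine Finset.sum_congr rfl (fun j _ => Finset.sum_congr rfl (fun k _ => ?_))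
    rw [hb _ (by simpa using hbound j k 0 (by norm_num))]
    norm_num
  have h2 : ∑ j : Fin (r + 1), ∑ k : Fin (r + 1),
      (b ((j : ℕ) + (k : ℕ) + 2) : ℂ) * ξ k * starRingEnd ℂ (ξ j)
      = ((∫ t in Set.Icc (0:ℝ) Λ, t ^ 2 * p t ∂σ.measure : ℝ) : ℂ) := by
    rw [← key_sum Λ σ r 2 ξ]
    refine Finset.sum_congr rfl (fun j _ => Finset.sum_congr rfl (fun k _ => ?_))
    rw [hb _ (hbound j k 2 le_rfl)]
  have hI0 : (∫ t in Set.Icc (0:ℝ) Λ, t ^ 0 * p t ∂σ.measure : ℝ) = 0 := by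
    have := h0 ▸ h
    exact_mod_cast this
  have hpc : Continuous p := by
    apply Continuous.pow
    apply Continuous.norm
    exact continuous_finset_sum _ (fun k _ => by continuity)
  have hint0 : IntegrableOn (fun t : ℝ => t ^ 0 * p t) (Set.Icc (0:ℝ) Λ) σ.measure :=
    ((continuous_pow 0).mul hpc).integrableOn_Icc
  have hint2 : IntegrableOn (fun t : ℝ => t ^ 2 * p t) (Set.Icc (0:ℝ) Λ) σ.measure :=
    ((continuous_pow 2).mul hpc).integrableOn_Icc
  have hintL : IntegrableOn (fun t : ℝ => Λ ^ 2 * (t ^ 0 * p t)) (Set.Icc (0:ℝ) Λ)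
      σ.measure := hint0.const_mul _
  have hle : (∫ t in Set.Icc (0:ℝ) Λ, t ^ 2 * p t ∂σ.measure : ℝ)
      ≤ ∫ t in Set.Icc (0:ℝ) Λ, Λ ^ 2 * (t ^ 0 * p t) ∂σ.measure := by
    refine setIntegral_mono_on hint2 hintL measurableSet_Icc (fun t ht => ?_)
    have ht2 : t ^ 2 ≤ Λ ^ 2 := by nlinarith [ht.1, ht.2]
    have hpt : 0 ≤ p t := by positivity
    simp only [pow_zero, one_mul]
    exact mul_le_mul_of_nonneg_right ht2 hpt
  have hge : 0 ≤ (∫ t in Set.Icc (0:ℝ) Λ, t ^ 2 * p t ∂σ.measure : ℝ) :=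
    integral_nonneg (fun t => by positivity)
  have hI2 : (∫ t in Set.Icc (0:ℝ) Λ, t ^ 2 * p t ∂σ.measure : ℝ) = 0 := by
    rw [integral_const_mul, hI0, mul_zero] at hle
    linarith
  rw [h2, hI2, Complex.ofReal_zero]
end

section
/- If σ is a non-decreasing function on [0, Λ] with moments b_k and ξ_0,…,ξ_r (r ≤ m−1) satisfy Σ_{j,k=0}^r b_{j+k+1} ξ_k conj(ξ_j) = 0, then Σ_{j,k=0}^r b_{j+k+2} ξ_k conj(ξ_j) = 0. -/
open MeasureTheory

theorem stmt4 (Λ : ℝ) (hΛ : 0 < Λ) (m : ℕ) (hm : 1 ≤ m) (σ : StieltjesFunction ℝ)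
    (b : ℕ → ℝ)
    (hb : ∀ k ≤ 2 * m, b k = ∫ t in Set.Icc (0:ℝ) Λ, t ^ k ∂σ.measure)
    (r : ℕ) (hr : r + 1 ≤ m) (ξ : Fin (r + 1) → ℂ)
    (h : ∑ j : Fin (r + 1), ∑ k : Fin (r + 1),
        (b ((j : ℕ) + (k : ℕ) + 1) : ℂ) * ξ k * starRingEnd ℂ (ξ j) = 0) :
    ∑ j : Fin (r + 1), ∑ k : Fin (r + 1),
        (b ((j : ℕ) + (k : ℕ) + 2) : ℂ) * ξ k * starRingEnd ℂ (ξ j) = 0 := by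
  classical
  set μ := σ.measure.restrict (Set.Icc (0:ℝ) Λ) with hμdef
  have hfin : ∀ n : ℕ, Integrable (fun t : ℝ => t ^ n) μ := fun n =>
    (continuous_pow n).continuousOn.integrableOn_compact isCompact_Icc
  set p : ℝ → ℂ := fun t => ∑ k : Fin (r + 1), ξ k * (t : ℂ) ^ (k : ℕ) with hp
  -- pointwise identity
  have point : ∀ (c : ℕ) (t : ℝ),
      (∑ j : Fin (r + 1), ∑ k : Fin (r + 1),
        ((t : ℂ)) ^ ((j : ℕ) + (k : ℕ) + c) * ξ k * starRingEnd ℂ (ξ j))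
      = ((t ^ c * Complex.normSq (p t) : ℝ) : ℂ) := by
    intro c t
    rw [Complex.ofReal_mul, Complex.ofReal_pow, ← Complex.mul_conj, hp, map_sum]
    simp only [map_mul, Complex.conj_ofReal, map_pow]
    rw [Finset.sum_mul_sum, Finset.mul_sum]
    rw [Finset.sum_comm]
    refine Finset.sum_congr rfl fun j _ => ?_
    rw [Finset.mul_sum]
    refine Finset.sum_congr rfl fun k _ => ?_
    rw [pow_add, pow_add]
    ring
  -- key: the double sum equals an integral
  have key : ∀ c : ℕ, (∀ j k : Fin (r + 1), (j : ℕ) + (k : ℕ) + c ≤ 2 * m) →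
      (∑ j : Fin (r + 1), ∑ k : Fin (r + 1),
        (b ((j : ℕ) + (k : ℕ) + c) : ℂ) * ξ k * starRingEnd ℂ (ξ j))
      = ((∫ t, t ^ c * Complex.normSq (p t) ∂μ : ℝ) : ℂ) := by
    intro c hc
    have hint : ∀ j k : Fin (r + 1),
        Integrable (fun t : ℝ =>
          ((t : ℂ)) ^ ((j : ℕ) + (k : ℕ) + c) * ξ k * starRingEnd ℂ (ξ j)) μ := by
      intro j k
      have : Integrable (fun t : ℝ => ((t ^ ((j : ℕ) + (k : ℕ) + c) : ℝ) : ℂ)) μ :=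
        (hfin _).ofReal
      simpa [Complex.ofReal_pow, mul_assoc] using (this.mul_const (ξ k * starRingEnd ℂ (ξ j)))
    calc (∑ j : Fin (r + 1), ∑ k : Fin (r + 1),
          (b ((j : ℕ) + (k : ℕ) + c) : ℂ) * ξ k * starRingEnd ℂ (ξ j))
        = ∑ j : Fin (r + 1), ∑ k : Fin (r + 1),
            ∫ t, ((t : ℂ)) ^ ((j : ℕ) + (k : ℕ) + c) * ξ k * starRingEnd ℂ (ξ j) ∂μ := by
          refine Finset.sum_congr rfl fun j _ => Finset.sum_congr rfl fun k _ => ?_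
          have hcast : ((∫ t, t ^ ((j : ℕ) + (k : ℕ) + c) ∂μ : ℝ) : ℂ)
              = ∫ t, ((t ^ ((j : ℕ) + (k : ℕ) + c) : ℝ) : ℂ) ∂μ := integral_ofReal.symm
          rw [hb _ (hc j k), hcast, ← integral_mul_const, ← integral_mul_const]
          refine integral_congr_ae (Filter.Eventually.of_forall fun t => ?_)
          push_cast
          ring
      _ = ∫ t, ∑ j : Fin (r + 1), ∑ k : Fin (r + 1),
            ((t : ℂ)) ^ ((j : ℕ) + (k : ℕ) + c) * ξ k * starRingEnd ℂ (ξ j) ∂μ := by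
          rw [integral_finset_sum _ (fun j _ => integrable_finset_sum _ (fun k _ => hint j k))]
          exact Finset.sum_congr rfl fun j _ =>
            (integral_finset_sum _ (fun k _ => hint j k)).symm
      _ = ∫ t, ((t ^ c * Complex.normSq (p t) : ℝ) : ℂ) ∂μ :=
          integral_congr_ae (Filter.Eventually.of_forall fun t => point c t)
      _ = ((∫ t, t ^ c * Complex.normSq (p t) ∂μ : ℝ) : ℂ) := integral_ofReal
  have hc1 : ∀ j k : Fin (r + 1), (j : ℕ) + (k : ℕ) + 1 ≤ 2 * m := by
    intro j k; have := j.is_le; have := k.is_le; omega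
  have hc2 : ∀ j k : Fin (r + 1), (j : ℕ) + (k : ℕ) + 2 ≤ 2 * m := by
    intro j k; have := j.is_le; have := k.is_le; omega
  -- the first-moment integral vanishes
  have h1 : (∫ t, t ^ 1 * Complex.normSq (p t) ∂μ) = 0 := by
    have := key 1 hc1
    rw [this] at h
    exact_mod_cast h
  -- integrand nonneg a.e. and integrable
  have hcont : Continuous fun t : ℝ => t * Complex.normSq (p t) := by
    apply continuous_id.mul
    exact Complex.continuous_normSq.comp
      (continuous_finset_sum _ fun k _ => continuous_const.mul (Complex.continuous_ofReal.pow _))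
  have hgint : Integrable (fun t : ℝ => t * Complex.normSq (p t)) μ :=
    hcont.continuousOn.integrableOn_compact isCompact_Icc
  have hnn : 0 ≤ᵐ[μ] fun t : ℝ => t * Complex.normSq (p t) := by
    filter_upwards [ae_restrict_mem measurableSet_Icc] with t ht
    exact mul_nonneg ht.1 (Complex.normSq_nonneg _)
  have hzero : (fun t : ℝ => t * Complex.normSq (p t)) =ᵐ[μ] 0 := by
    rw [← integral_eq_zero_iff_of_nonneg_ae hnn hgint]
    simpa [pow_one] using h1
  have h2 : (∫ t, t ^ 2 * Complex.normSq (p t) ∂μ) = 0 := by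
    rw [show (0 : ℝ) = ∫ t, (0 : ℝ) ∂μ by simp]
    refine integral_congr_ae ?_
    filter_upwards [hzero] with t ht
    have : t * Complex.normSq (p t) = 0 := ht
    calc t ^ 2 * Complex.normSq (p t) = t * (t * Complex.normSq (p t)) := by ring
      _ = 0 := by rw [this, mul_zero]
  rw [key 2 hc2, h2, Complex.ofReal_zero]
end

section
/- Suppose σ is a purely atomic non-decreasing measure on [0,∞) with finitely many atoms at points t_1 < … < t_s with positive masses μ_1,…,μ_s, having moments b_k = ∫₀^∞ t^k dσ(t) for k ≤ 2m with s ≤ m. If t_s > Λ, then there exists a polynomial Q of degree ≤ m−1 such that Λ·Σ_{j,k=0}^{m-1} b_{j+k} η_k conj(η_j) − Σ_{j,k=0}^{m-1} b_{j+k+1} η_k conj(η_j) < 0, where η are the coefficients of Q. Consequently, if Λ·Γ_{m-1} − Γ_{m-1}^{(1)} is positive semidefinite, then all atoms lie in [0, Λ]. -/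
theorem stmt5 (Λ : ℝ) (hΛ : 0 < Λ) (m s : ℕ) (hm : 1 ≤ m) (hs : 1 ≤ s) (hsm : s ≤ m)
    (t : Fin s → ℝ) (ht : StrictMono t) (ht0 : ∀ j, 0 ≤ t j)
    (μ : Fin s → ℝ) (hμ : ∀ j, 0 < μ j)
    (b : ℕ → ℝ) (hb : ∀ k ≤ 2 * m, b k = ∑ j, μ j * t j ^ k) :
    ((Λ < t ⟨s - 1, by omega⟩) →
      ∃ η : Fin m → ℂ,
        ((Λ : ℂ) * (∑ j : Fin m, ∑ k : Fin m,
            (b ((j : ℕ) + (k : ℕ)) : ℂ) * η k * starRingEnd ℂ (η j))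
          - ∑ j : Fin m, ∑ k : Fin m,
            (b ((j : ℕ) + (k : ℕ) + 1) : ℂ) * η k * starRingEnd ℂ (η j)).re < 0)
    ∧ ((Matrix.of fun j k : Fin m =>
          Λ * b ((j : ℕ) + (k : ℕ)) - b ((j : ℕ) + (k : ℕ) + 1)).PosSemidef →
        ∀ j, t j ≤ Λ) := by
  classical
  set L : Fin s := ⟨s - 1, by omega⟩ with hLdef
  -- Main real-valued claim
  have key : Λ < t L → ∃ x : Fin m → ℝ,
      Λ * (∑ j : Fin m, ∑ k : Fin m, b ((j : ℕ) + (k : ℕ)) * x k * x j)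
        - ∑ j : Fin m, ∑ k : Fin m, b ((j : ℕ) + (k : ℕ) + 1) * x k * x j < 0 := by
    intro hΛt
    set P : Polynomial ℝ := ∏ j ∈ Finset.univ.erase L, (Polynomial.X - Polynomial.C (t j))
      with hP
    have hdeg : P.natDegree < m := by
      have : P.natDegree = (Finset.univ.erase L).card := by
        rw [hP, Polynomial.natDegree_prod]
        · simp [Polynomial.natDegree_X_sub_C]
        · intro i _
          exact Polynomial.X_sub_C_ne_zero _
      rw [this, Finset.card_erase_of_mem (Finset.mem_univ L), Finset.card_univ, Fintype.card_fin]
      omega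
    have heval : ∀ y : ℝ, ∑ k : Fin m, P.coeff k * y ^ (k : ℕ) = P.eval y := by
      intro y
      rw [Polynomial.eval_eq_sum_range' hdeg, Fin.sum_univ_eq_sum_range (fun k => P.coeff k * y ^ k)]
    -- eval at atoms
    have hev0 : ∀ i : Fin s, i ≠ L → P.eval (t i) = 0 := by
      intro i hi
      rw [hP, Polynomial.eval_prod]
      exact Finset.prod_eq_zero (Finset.mem_erase.mpr ⟨hi, Finset.mem_univ i⟩) (by simp)
    have hevL : 0 < P.eval (t L) := by
      rw [hP, Polynomial.eval_prod]
      apply Finset.prod_pos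
      intro i hi
      have hiL : i < L := by
        rcases Finset.mem_erase.mp hi with ⟨hne, -⟩
        have : (i : ℕ) ≤ s - 1 := by omega
        have : (i : ℕ) < s - 1 := lt_of_le_of_ne this (by
          intro h; apply hne; apply Fin.ext; simpa using h)
        exact this
      simp only [Polynomial.eval_sub, Polynomial.eval_X, Polynomial.eval_C]
      linarith [ht hiL]
    refine ⟨fun k => P.coeff k, ?_⟩
    show Λ * (∑ j : Fin m, ∑ k : Fin m, b ((j : ℕ) + (k : ℕ)) * P.coeff k * P.coeff j)
        - ∑ j : Fin m, ∑ k : Fin m, b ((j : ℕ) + (k : ℕ) + 1) * P.coeff k * P.coeff j < 0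
    have hsum : ∀ e : ℕ, e ≤ 1 →
        (∑ j : Fin m, ∑ k : Fin m, b ((j : ℕ) + (k : ℕ) + e) * P.coeff k * P.coeff j)
          = ∑ i : Fin s, μ i * t i ^ e * (P.eval (t i)) ^ 2 := by
      intro e he
      have hrw : ∀ j k : Fin m, b ((j : ℕ) + (k : ℕ) + e) * P.coeff k * P.coeff j
          = ∑ i : Fin s, μ i * t i ^ e * ((P.coeff k * t i ^ (k : ℕ)) * (P.coeff j * t i ^ (j : ℕ))) := by
        intro j k
        rw [hb _ (by omega)]
        rw [Finset.sum_mul, Finset.sum_mul]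
        apply Finset.sum_congr rfl
        intro i _
        rw [pow_add, pow_add]
        ring
      calc (∑ j : Fin m, ∑ k : Fin m, b ((j : ℕ) + (k : ℕ) + e) * P.coeff k * P.coeff j)
          = ∑ j : Fin m, ∑ k : Fin m, ∑ i : Fin s,
              μ i * t i ^ e * ((P.coeff k * t i ^ (k : ℕ)) * (P.coeff j * t i ^ (j : ℕ))) := by
            apply Finset.sum_congr rfl; intro j _
            apply Finset.sum_congr rfl; intro k _
            exact hrw j k
        _ = ∑ i : Fin s, ∑ j : Fin m, ∑ k : Fin m,
              μ i * t i ^ e * ((P.coeff k * t i ^ (k : ℕ)) * (P.coeff j * t i ^ (j : ℕ))) := by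
            exact Eq.trans (Finset.sum_congr rfl fun j _ => Finset.sum_comm)
              Finset.sum_comm
        _ = ∑ i : Fin s, μ i * t i ^ e *
              ((∑ k : Fin m, P.coeff k * t i ^ (k : ℕ)) * (∑ j : Fin m, P.coeff j * t i ^ (j : ℕ))) := by
            apply Finset.sum_congr rfl; intro i _
            have h1 : ∀ j : Fin m, (∑ k : Fin m,
                μ i * t i ^ e * ((P.coeff k * t i ^ (k : ℕ)) * (P.coeff j * t i ^ (j : ℕ))))
                = (μ i * t i ^ e * (P.coeff j * t i ^ (j : ℕ)))
                    * ∑ k : Fin m, P.coeff k * t i ^ (k : ℕ) := by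
              intro j
              rw [Finset.mul_sum]
              exact Finset.sum_congr rfl fun k _ => by ring
            calc (∑ j : Fin m, ∑ k : Fin m,
                  μ i * t i ^ e * ((P.coeff k * t i ^ (k : ℕ)) * (P.coeff j * t i ^ (j : ℕ))))
                = ∑ j : Fin m, (μ i * t i ^ e * (P.coeff j * t i ^ (j : ℕ)))
                    * ∑ k : Fin m, P.coeff k * t i ^ (k : ℕ) := by
                  exact Finset.sum_congr rfl fun j _ => h1 j
              _ = μ i * t i ^ e * ((∑ k : Fin m, P.coeff k * t i ^ (k : ℕ))
                    * (∑ j : Fin m, P.coeff j * t i ^ (j : ℕ))) := by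
                  rw [← Finset.sum_mul, ← Finset.mul_sum]; ring
        _ = ∑ i : Fin s, μ i * t i ^ e * (P.eval (t i)) ^ 2 := by
            apply Finset.sum_congr rfl; intro i _
            rw [heval]; ring
    have hs0 := hsum 0 (by norm_num)
    simp only [add_zero, Nat.add_zero] at hs0
    rw [hs0, hsum 1 (by norm_num)]
    have : Λ * (∑ i : Fin s, μ i * t i ^ 0 * (P.eval (t i)) ^ 2)
        - ∑ i : Fin s, μ i * t i ^ 1 * (P.eval (t i)) ^ 2
        = ∑ i : Fin s, μ i * (Λ - t i) * (P.eval (t i)) ^ 2 := by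
      rw [Finset.mul_sum, ← Finset.sum_sub_distrib]
      apply Finset.sum_congr rfl; intro i _; ring
    rw [this]
    rw [Finset.sum_eq_single L]
    · have h1 : 0 < μ L * (P.eval (t L)) ^ 2 := mul_pos (hμ L) (pow_pos hevL 2)
      nlinarith
    · intro i _ hi
      rw [hev0 i hi]; ring
    · intro h; exact absurd (Finset.mem_univ L) h
  constructor
  · intro hΛt
    obtain ⟨x, hx⟩ := key hΛt
    refine ⟨fun k => ((x k : ℝ) : ℂ), ?_⟩
    have hre : ((Λ : ℂ) * (∑ j : Fin m, ∑ k : Fin m,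
            (b ((j : ℕ) + (k : ℕ)) : ℂ) * (x k : ℂ) * starRingEnd ℂ ((x j : ℂ)))
          - ∑ j : Fin m, ∑ k : Fin m,
            (b ((j : ℕ) + (k : ℕ) + 1) : ℂ) * (x k : ℂ) * starRingEnd ℂ ((x j : ℂ)))
        = ((Λ * (∑ j : Fin m, ∑ k : Fin m, b ((j : ℕ) + (k : ℕ)) * x k * x j)
          - ∑ j : Fin m, ∑ k : Fin m, b ((j : ℕ) + (k : ℕ) + 1) * x k * x j : ℝ) : ℂ) := by
      push_cast
      simp [Complex.conj_ofReal]
    rw [hre, Complex.ofReal_re]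
    exact hx
  · intro hPSD j
    by_contra hj
    push_neg at hj
    have hjL : t j ≤ t L := by
      apply ht.monotone
      show (j : ℕ) ≤ s - 1
      omega
    obtain ⟨x, hx⟩ := key (lt_of_lt_of_le hj hjL)
    have h0 := hPSD.dotProduct_mulVec_nonneg x
    have hdot : dotProduct (star x) ((Matrix.of fun j k : Fin m =>
          Λ * b ((j : ℕ) + (k : ℕ)) - b ((j : ℕ) + (k : ℕ) + 1)).mulVec x)
        = Λ * (∑ j : Fin m, ∑ k : Fin m, b ((j : ℕ) + (k : ℕ)) * x k * x j)
          - ∑ j : Fin m, ∑ k : Fin m, b ((j : ℕ) + (k : ℕ) + 1) * x k * x j := by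
      simp only [dotProduct, Matrix.mulVec, Matrix.of_apply, Pi.star_apply,
        star_trivial, Finset.mul_sum, Finset.sum_mul, mul_sub, sub_mul]
      rw [← Finset.sum_sub_distrib]
      apply Finset.sum_congr rfl; intro a _
      rw [← Finset.sum_sub_distrib]
      apply Finset.sum_congr rfl; intro c _
      ring
    rw [hdot] at h0
    linarith
end

section
/- If the Hankel matrix Γ_m = (b_{j+k})_{j,k=0}^m is positive definite and the implication 'Σ b_{j+k+1} ξ_k conj(ξ_j) = 0 ⇒ Σ b_{j+k+2} ξ_k conj(ξ_j) = 0' holds for all ξ with r ≤ m−1, and Γ_m^{(1)} = (b_{j+k+1})_{j,k=0}^{m-1} is positive semidefinite, then Γ_{m-1}^{(1)} is positive definite. -/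
theorem stmt7 (m : ℕ) (hm : 1 ≤ m) (b : ℕ → ℝ)
    (hΓ : (Matrix.of fun j k : Fin (m + 1) => b ((j : ℕ) + (k : ℕ))).PosDef)
    (himp : ∀ r : ℕ, r + 1 ≤ m → ∀ ξ : Fin (r + 1) → ℂ,
        (∑ j : Fin (r + 1), ∑ k : Fin (r + 1),
          (b ((j : ℕ) + (k : ℕ) + 1) : ℂ) * ξ k * starRingEnd ℂ (ξ j) = 0) →
        ∑ j : Fin (r + 1), ∑ k : Fin (r + 1),
          (b ((j : ℕ) + (k : ℕ) + 2) : ℂ) * ξ k * starRingEnd ℂ (ξ j) = 0)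
    (hΓ1 : (Matrix.of fun j k : Fin m => b ((j : ℕ) + (k : ℕ) + 1)).PosSemidef) :
    (Matrix.of fun j k : Fin m => b ((j : ℕ) + (k : ℕ) + 1)).PosDef := by
  obtain ⟨r, rfl⟩ : ∃ r, m = r + 1 := ⟨m - 1, by omega⟩
  refine Matrix.posDef_iff_dotProduct_mulVec.mpr ⟨hΓ1.1, fun x hx => ?_⟩
  rcases (hΓ1.dotProduct_mulVec_nonneg x).lt_or_eq with h | h
  · exact h
  exfalso
  -- the Γ₁ quadratic form vanishes on x
  have h0 : ∑ j : Fin (r + 1), ∑ k : Fin (r + 1), b (↑j + ↑k + 1) * x k * x j = 0 := by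
    have := h.symm
    simpa [dotProduct, Matrix.mulVec, Finset.mul_sum, mul_comm, mul_assoc,
      mul_left_comm] using this
  have h1 : ∑ j : Fin (r + 1), ∑ k : Fin (r + 1),
      (b (↑j + ↑k + 1) : ℂ) * ((x k : ℂ)) * starRingEnd ℂ ((x j : ℂ)) = 0 := by
    simp only [Complex.conj_ofReal]
    exact_mod_cast congrArg (Complex.ofReal) h0
  have h2 := himp r le_rfl (fun k => (x k : ℂ)) h1
  have h2' : ∑ j : Fin (r + 1), ∑ k : Fin (r + 1), b (↑j + ↑k + 2) * x k * x j = 0 := by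
    simp only [Complex.conj_ofReal] at h2
    exact_mod_cast h2
  -- extend x by a zero at position 0
  set y : Fin (r + 2) → ℝ := Fin.cons 0 x with hy
  have hy0 : y ≠ 0 := by
    intro hcon
    apply hx
    funext i
    have := congrFun hcon i.succ
    simpa [hy] using this
  have hpos := hΓ.dotProduct_mulVec_pos hy0
  have harith : ∀ a c : ℕ, a + 1 + (c + 1) = a + c + 2 := fun a c => by omega
  have heq : dotProduct (star y)
        ((Matrix.of fun j k : Fin (r + 1 + 1) => b (↑j + ↑k)).mulVec y)
      = ∑ j : Fin (r + 1), ∑ k : Fin (r + 1), b (↑j + ↑k + 2) * x k * x j := by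
    simp [dotProduct, Matrix.mulVec, hy, Fin.sum_univ_succ, Finset.mul_sum, harith,
      mul_add, add_mul, Finset.sum_add_distrib,
      mul_comm, mul_assoc, mul_left_comm]
  rw [heq, h2'] at hpos
  exact lt_irrefl 0 hpos
end

section
/- (Christoffel–Darboux) Let {d_k} be the orthonormal polynomials associated with a measure dσ having positive definite Hankel moment matrix, with leading recurrence coefficient β_{m-1} = √(Δ_m Δ_{m-2})/Δ_{m-1}. Then for all λ, μ with λ ≠ μ: β_{m-1}·(d_{m-1}(λ)d_m(μ) − d_{m-1}(μ)d_m(λ))/(μ − λ) = Σ_{k=0}^{m-1} d_k(λ) d_k(μ). -/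
open Polynomial Matrix

noncomputable def cdL (b : ℕ → ℝ) : Polynomial ℝ →ₗ[ℝ] ℝ where
  toFun p := p.sum fun n a => a * b n
  map_add' p q := Polynomial.sum_add_index p q _ (by simp) (by intros; ring)
  map_smul' c p := by
    simp only [RingHom.id_apply, smul_eq_mul]
    rw [Polynomial.sum_smul_index p c _ (by simp), Polynomial.sum,
      Polynomial.sum, Finset.mul_sum]
    exact Finset.sum_congr rfl fun n _ => by ring

lemma cdL_monomial (b : ℕ → ℝ) (n : ℕ) (a : ℝ) : cdL b (Polynomial.monomial n a) = a * b n := by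
  simp [cdL, Polynomial.sum_monomial_index]


noncomputable def cdM (b : ℕ → ℝ) (n : ℕ) : Matrix (Fin (n+2)) (Fin (n+2)) (Polynomial ℝ) :=
  Matrix.of fun i j : Fin (n+2) =>
    if (i : ℕ) < n+1 then Polynomial.C (b ((i : ℕ) + (j : ℕ))) else Polynomial.X ^ (j : ℕ)

def cdS (b : ℕ → ℝ) (n : ℕ) (j : Fin (n+2)) : Matrix (Fin (n+1)) (Fin (n+1)) ℝ :=
  Matrix.of fun r c : Fin (n+1) => b ((r : ℕ) + (j.succAbove c : ℕ))

lemma cdM_det (b : ℕ → ℝ) (n : ℕ) :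
    (cdM b n).det = ∑ j : Fin (n+2),
      Polynomial.C ((-1)^(n+1+(j:ℕ)) * (cdS b n j).det) * Polynomial.X^(j:ℕ) := by
  rw [Matrix.det_succ_row (cdM b n) (Fin.last (n+1))]
  refine Finset.sum_congr rfl fun j _ => ?_
  have h1 : (cdM b n) (Fin.last (n+1)) j = Polynomial.X ^ (j : ℕ) := by
    simp [cdM, Fin.val_last]
  have h2 : (cdM b n).submatrix (Fin.last (n+1)).succAbove j.succAbove
      = (cdS b n j).map Polynomial.C := by
    ext r c
    simp only [Matrix.submatrix_apply, Fin.succAbove_last, cdM, cdS, Matrix.map_apply,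
      Matrix.of_apply, Fin.coe_castSucc]
    rw [if_pos (by omega)]
  rw [h1, h2, show (cdS b n j).map ⇑Polynomial.C = (Polynomial.C).mapMatrix (cdS b n j) from rfl, ← RingHom.map_det, Fin.val_last, _root_.map_mul, map_pow, map_neg, _root_.map_one]
  ring

lemma cdM_natDegree (b : ℕ → ℝ) (n : ℕ) : (cdM b n).det.natDegree ≤ n+1 := by
  rw [cdM_det]
  refine Polynomial.natDegree_sum_le_of_forall_le _ _ fun j _ => ?_
  refine le_trans (Polynomial.natDegree_mul_le) ?_
  simp only [Polynomial.natDegree_C, Polynomial.natDegree_X_pow, zero_add]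
  omega

lemma cdM_coeff (b : ℕ → ℝ) (n : ℕ) :
    (cdM b n).det.coeff (n+1) = (Matrix.of fun r c : Fin (n+1) => b ((r:ℕ)+(c:ℕ))).det := by
  rw [cdM_det, Polynomial.finset_sum_coeff]
  rw [Finset.sum_eq_single (Fin.last (n+1))]
  · have h0 : cdS b n (Fin.last (n+1)) = Matrix.of fun r c : Fin (n+1) => b ((r:ℕ)+(c:ℕ)) := by
      ext r c
      simp [cdS, Fin.succAbove_last]
    rw [h0, Polynomial.coeff_C_mul, Polynomial.coeff_X_pow, Fin.val_last, if_pos rfl,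
      show ((-1:ℝ))^(n+1+(n+1)) = 1 by rw [show n+1+(n+1) = 2*(n+1) by ring, pow_mul]; simp]
    ring
  · intro j _ hj
    have hne : ¬ ((n+1) = (j:ℕ)) := by
      intro h; exact hj (Fin.ext (by simp [Fin.val_last, ← h]))
    rw [Polynomial.coeff_C_mul, Polynomial.coeff_X_pow, if_neg hne, mul_zero]
  · simp

lemma cdL_pow_mul_det (b : ℕ → ℝ) (n i : ℕ) :
    cdL b (Polynomial.X^i * (cdM b n).det)
      = (Matrix.of fun r c : Fin (n+2) =>
          if (r:ℕ) < n+1 then b ((r:ℕ)+(c:ℕ)) else b (i+(c:ℕ))).det := by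
  set N := Matrix.of fun r c : Fin (n+2) =>
      if (r:ℕ) < n+1 then b ((r:ℕ)+(c:ℕ)) else b (i+(c:ℕ)) with hN
  rw [cdM_det, Finset.mul_sum, map_sum, Matrix.det_succ_row N (Fin.last (n+1))]
  refine Finset.sum_congr rfl fun j _ => ?_
  have h1 : N (Fin.last (n+1)) j = b (i+(j:ℕ)) := by simp [hN, Fin.val_last]
  have h2 : N.submatrix (Fin.last (n+1)).succAbove j.succAbove = cdS b n j := by
    ext r c
    simp only [hN, Matrix.submatrix_apply, Fin.succAbove_last, cdS, Matrix.of_apply,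
      Fin.coe_castSucc]
    rw [if_pos (by omega)]
  rw [h1, h2, Fin.val_last]
  have h3 : Polynomial.X^i * (Polynomial.C ((-1)^(n+1+(j:ℕ)) * (cdS b n j).det) * Polynomial.X^(j:ℕ))
      = Polynomial.monomial (i+(j:ℕ)) ((-1)^(n+1+(j:ℕ)) * (cdS b n j).det) := by
    rw [← Polynomial.C_mul_X_pow_eq_monomial, pow_add]
    ring
  rw [h3, cdL_monomial]
  ring

lemma cdL_ortho (b : ℕ → ℝ) (n i : ℕ) (hi : i < n+1) :
    cdL b (Polynomial.X^i * (cdM b n).det) = 0 := by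
  rw [cdL_pow_mul_det]
  refine Matrix.det_zero_of_row_eq (i := (⟨i, by omega⟩ : Fin (n+2))) (j := Fin.last (n+1))
    (by simp [Fin.ext_iff, Fin.val_last]; omega) ?_
  funext c
  simp [Fin.val_last, hi]

lemma cdL_diag (b : ℕ → ℝ) (n : ℕ) :
    cdL b (Polynomial.X^(n+1) * (cdM b n).det)
      = (Matrix.of fun r c : Fin (n+2) => b ((r:ℕ)+(c:ℕ))).det := by
  rw [cdL_pow_mul_det]
  congr 1
  funext r c
  simp only [Matrix.of_apply]
  split
  · rfl
  · next h => rw [show (r:ℕ) = n+1 by omega]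


lemma cd_deg_drop {p : Polynomial ℝ} {n : ℕ} (h1 : p.natDegree ≤ n+1)
    (h2 : p.coeff (n+1) = 0) : p.natDegree ≤ n := by
  rcases eq_or_ne p 0 with rfl | hp
  · simp
  · have h3 : p.natDegree ≠ n+1 := by
      intro h
      exact Polynomial.coeff_ne_zero_of_eq_degree (by rw [Polynomial.degree_eq_natDegree hp, h]) h2
    omega

lemma cd_tele (f : ℕ → ℝ) (n : ℕ) :
    ∑ k ∈ Finset.range (n+1), (f k - if k = 0 then 0 else f (k-1)) = f n := by
  induction n with
  | zero => simp
  | succ n ih => rw [Finset.sum_range_succ, ih]; simp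

theorem stmt11 (m : ℕ) (hm : 2 ≤ m) (b : ℕ → ℝ) (Δ : ℕ → ℝ)
    (hΔ : ∀ k, Δ k = (Matrix.of fun i j : Fin (k + 1) => b ((i : ℕ) + (j : ℕ))).det)
    (hΔpos : ∀ k ≤ m, 0 < Δ k)
    (d : ℕ → Polynomial ℝ)
    (hd0 : d 0 = Polynomial.C (1 / Real.sqrt (b 0)))
    (hd : ∀ k, 1 ≤ k → k ≤ m → d k =
      (1 / Real.sqrt (Δ k * Δ (k - 1))) •
        (Matrix.of fun i j : Fin (k + 1) =>
          if (i : ℕ) < k then Polynomial.C (b ((i : ℕ) + (j : ℕ)))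
          else Polynomial.X ^ (j : ℕ)).det)
    (β : ℝ) (hβ : β = Real.sqrt (Δ m * Δ (m - 2)) / Δ (m - 1))
    (lam mu : ℝ) (hne : lam ≠ mu) :
    β * ((d (m - 1)).eval lam * (d m).eval mu - (d (m - 1)).eval mu * (d m).eval lam)
        / (mu - lam)
      = ∑ k ∈ Finset.range m, (d k).eval lam * (d k).eval mu := by
  -- basic setup
  have hb0 : b 0 = Δ 0 := by rw [hΔ 0, Matrix.det_fin_one]; rfl
  have hb0pos : 0 < b 0 := hb0 ▸ hΔpos 0 (by omega)
  set g : ℕ → ℝ := fun k => (d k).coeff k with hgdef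
  have hdS : ∀ n : ℕ, n+1 ≤ m → d (n+1) = (1 / Real.sqrt (Δ (n+1) * Δ n)) • (cdM b n).det := by
    intro n hn
    exact hd (n+1) (by omega) hn
  have hdeg : ∀ k ≤ m, (d k).natDegree ≤ k := by
    intro k hk
    match k with
    | 0 => rw [hd0]; simp
    | (n+1) =>
      rw [hdS n hk]
      exact le_trans (Polynomial.natDegree_smul_le _ _) (cdM_natDegree b n)
  have hg0 : g 0 = 1 / Real.sqrt (b 0) := by rw [hgdef]; simp [hd0]
  have hgS : ∀ n : ℕ, n+1 ≤ m → g (n+1) = (1 / Real.sqrt (Δ (n+1) * Δ n)) * Δ n := by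
    intro n hn
    rw [hgdef]
    simp only [hdS n hn, Polynomial.coeff_smul, smul_eq_mul, cdM_coeff]
    rw [← hΔ n]
  have hgpos : ∀ k ≤ m, 0 < g k := by
    intro k hk
    match k with
    | 0 =>
      rw [hg0]
      positivity
    | (n+1) =>
      rw [hgS n hk]
      have h1 : 0 < Δ (n+1) := hΔpos _ hk
      have h2 : 0 < Δ n := hΔpos _ (by omega)
      positivity
  have hLd : ∀ k ≤ m, cdL b (Polynomial.X^k * d k) = 1 / g k := by
    intro k hk
    match k with
    | 0 =>
      rw [hd0, pow_zero, one_mul, hg0, ← Polynomial.monomial_zero_left, cdL_monomial]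
      rw [one_div, one_div, inv_inv, inv_mul_eq_div, Real.div_sqrt]
    | (n+1) =>
      have h1 : 0 < Δ (n+1) := hΔpos _ hk
      have h2 : 0 < Δ n := hΔpos _ (by omega)
      rw [hdS n hk, mul_smul_comm, _root_.map_smul, smul_eq_mul, cdL_diag, ← hΔ (n+1), hgS n hk]
      set s := Real.sqrt (Δ (n+1) * Δ n) with hs
      have hs2 : s^2 = Δ (n+1) * Δ n := Real.sq_sqrt (by positivity)
      have hs0 : 0 < s := Real.sqrt_pos.mpr (by positivity)
      field_simp
      nlinarith [hs2, hs0, h1, h2]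
  have hortho : ∀ k ≤ m, ∀ p : Polynomial ℝ, p.natDegree < k → cdL b (p * d k) = 0 := by
    intro k hk p hp
    match k with
    | (n+1) =>
      rw [Polynomial.as_sum_range' p (n+1) hp, Finset.sum_mul, map_sum]
      refine Finset.sum_eq_zero fun i hi => ?_
      rw [← Polynomial.C_mul_X_pow_eq_monomial, mul_assoc, ← Polynomial.smul_eq_C_mul, _root_.map_smul,
        smul_eq_mul, hdS n hk, mul_smul_comm, _root_.map_smul, smul_eq_mul,
        cdL_ortho b n i (Finset.mem_range.mp hi), mul_zero, mul_zero]
  have hzero : ∀ i j : ℕ, i < j → j ≤ m → cdL b (d i * d j) = 0 := by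
    intro i j hij hj
    exact hortho j hj (d i) (lt_of_le_of_lt (hdeg i (by omega)) hij)
  have hone : ∀ j ≤ m, cdL b (d j * d j) = 1 := by
    intro j hj
    match j with
    | 0 =>
      rw [hd0, ← Polynomial.C_mul, ← Polynomial.monomial_zero_left, cdL_monomial]
      have hsq : Real.sqrt (b 0) ^ 2 = b 0 := Real.sq_sqrt hb0pos.le
      have h0 : (0:ℝ) < Real.sqrt (b 0) := Real.sqrt_pos.mpr hb0pos
      field_simp
      exact hsq.symm
    | (n+1) =>
      have hgp := hgpos (n+1) hj
      set r : Polynomial ℝ := d (n+1) - g (n+1) • Polynomial.X^(n+1) with hrdef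
      have hrc : r.coeff (n+1) = 0 := by
        rw [hrdef, Polynomial.coeff_sub, Polynomial.coeff_smul, Polynomial.coeff_X_pow,
          if_pos rfl, smul_eq_mul, mul_one, sub_self]
      have hrdeg : r.natDegree ≤ n := by
        refine cd_deg_drop ?_ hrc
        refine le_trans (Polynomial.natDegree_sub_le _ _) ?_
        simp only [max_le_iff]
        exact ⟨hdeg _ hj, le_trans (Polynomial.natDegree_smul_le _ _) (by simp)⟩
      have hsplit : d (n+1) = r + g (n+1) • Polynomial.X^(n+1) := by rw [hrdef]; ring
      have hstep : cdL b (d (n+1) * d (n+1))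
          = cdL b (r * d (n+1) + g (n+1) • (Polynomial.X^(n+1) * d (n+1))) := by
        rw [← smul_mul_assoc, ← add_mul, ← hsplit]
      rw [hstep, map_add, _root_.map_smul, smul_eq_mul,
        hortho (n+1) hj r (by omega), hLd (n+1) hj, zero_add, mul_one_div, div_self hgp.ne']
  have honor : ∀ i ≤ m, ∀ j ≤ m, cdL b (d i * d j) = if i = j then 1 else 0 := by
    intro i hi j hj
    rcases lt_trichotomy i j with h | rfl | h
    · rw [hzero i j h hj, if_neg (by omega)]
    · rw [hone i hi, if_pos rfl]
    · rw [mul_comm, hzero j i h hi, if_neg (by omega)]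
  have hspan : ∀ n ≤ m, ∀ p : Polynomial ℝ, p.natDegree ≤ n →
      ∃ e : ℕ → ℝ, p = ∑ i ∈ Finset.range (n+1), e i • d i := by
    intro n
    induction n with
    | zero =>
      intro _ p hp
      refine ⟨fun _ => p.coeff 0 * Real.sqrt (b 0), ?_⟩
      rw [Finset.sum_range_one, hd0, Polynomial.eq_C_of_natDegree_le_zero hp,
        Polynomial.smul_C, smul_eq_mul]
      congr 1
      have h0 : Real.sqrt (b 0) ≠ 0 := (Real.sqrt_pos.mpr hb0pos).ne'
      field_simp
      rw [Polynomial.coeff_C_zero]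
    | succ n ih =>
      intro hn p hp
      have hgp := hgpos (n+1) hn
      set q : Polynomial ℝ := p - (p.coeff (n+1) / g (n+1)) • d (n+1) with hq
      have hqc : q.coeff (n+1) = 0 := by
        rw [hq, Polynomial.coeff_sub, Polynomial.coeff_smul, smul_eq_mul,
          div_mul_cancel₀ _ hgp.ne', sub_self]
      have hqdeg : q.natDegree ≤ n := by
        refine cd_deg_drop ?_ hqc
        refine le_trans (Polynomial.natDegree_sub_le _ _) ?_
        simp only [max_le_iff]
        exact ⟨hp, le_trans (Polynomial.natDegree_smul_le _ _) (hdeg _ hn)⟩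
      obtain ⟨e, he⟩ := ih (by omega) q hqdeg
      refine ⟨fun i => if i = n+1 then p.coeff (n+1) / g (n+1) else e i, ?_⟩
      rw [Finset.sum_range_succ]
      simp only [↓reduceIte]
      have hsum : ∑ i ∈ Finset.range (n+1),
          (if i = n+1 then p.coeff (n+1) / g (n+1) else e i) • d i
          = ∑ i ∈ Finset.range (n+1), e i • d i := by
        refine Finset.sum_congr rfl fun i hi => ?_
        rw [if_neg (by have := Finset.mem_range.mp hi; omega)]
      rw [hsum, ← he, hq]
      ring
  have hcoef : ∀ n ≤ m, ∀ e : ℕ → ℝ, ∀ j ≤ n,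
      cdL b ((∑ i ∈ Finset.range (n+1), e i • d i) * d j) = e j := by
    intro n hn e j hj
    rw [Finset.sum_mul, map_sum]
    have hterm : ∀ i ∈ Finset.range (n+1),
        cdL b ((e i • d i) * d j) = if i = j then e i else 0 := by
      intro i hi
      rw [smul_mul_assoc, _root_.map_smul, smul_eq_mul,
        honor i (by have := Finset.mem_range.mp hi; omega) j (by omega)]
      split <;> simp
    rw [Finset.sum_congr rfl hterm, Finset.sum_ite_eq' (Finset.range (n+1)) j e,
      if_pos (Finset.mem_range.mpr (by omega))]
  have hXd : ∀ j : ℕ, j+1 ≤ m → cdL b ((Polynomial.X * d j) * d (j+1)) = g j / g (j+1) := by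
    intro j hj
    have hgp := hgpos (j+1) hj
    set s : Polynomial ℝ := Polynomial.X * d j - g j • Polynomial.X^(j+1) with hs
    have hsc : s.coeff (j+1) = 0 := by
      rw [hs, Polynomial.coeff_sub, Polynomial.coeff_X_mul, Polynomial.coeff_smul,
        Polynomial.coeff_X_pow, if_pos rfl, smul_eq_mul, mul_one, sub_self]
    have hsdeg : s.natDegree ≤ j := by
      refine cd_deg_drop ?_ hsc
      refine le_trans (Polynomial.natDegree_sub_le _ _) ?_
      simp only [max_le_iff]
      constructor
      · refine le_trans (Polynomial.natDegree_mul_le) ?_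
        have := hdeg j (by omega)
        simp only [Polynomial.natDegree_X]
        omega
      · exact le_trans (Polynomial.natDegree_smul_le _ _) (by simp)
    have hsplit : Polynomial.X * d j = s + g j • Polynomial.X^(j+1) := by rw [hs]; ring
    rw [hsplit, add_mul, map_add, smul_mul_assoc, _root_.map_smul, smul_eq_mul,
      hortho (j+1) hj s (by omega), hLd (j+1) hj, zero_add, mul_one_div]
  have hrec : ∀ k : ℕ, k+1 ≤ m →
      Polynomial.X * d k = (g k / g (k+1)) • d (k+1) + (cdL b (Polynomial.X * d k * d k)) • d k
        + (if k = 0 then 0 else (g (k-1) / g k) • d (k-1)) := by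
    intro k hk
    have hgpk := hgpos k (by omega)
    have hgpk1 := hgpos (k+1) hk
    set α : ℝ := cdL b (Polynomial.X * d k * d k) with hα
    set r : Polynomial ℝ := Polynomial.X * d k - (g k / g (k+1)) • d (k+1) - α • d k
        - (if k = 0 then 0 else (g (k-1) / g k) • d (k-1)) with hr
    have hite_deg : (if k = 0 then (0:Polynomial ℝ) else (g (k-1) / g k) • d (k-1)).natDegree ≤ k := by
      split
      · simp
      · next h =>
        refine le_trans (Polynomial.natDegree_smul_le _ _) ?_
        have := hdeg (k-1) (by omega)
        omega
    have hite_coeff : (if k = 0 then (0:Polynomial ℝ) else (g (k-1) / g k) • d (k-1)).coeff (k+1) = 0 := by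
      refine Polynomial.coeff_eq_zero_of_natDegree_lt (lt_of_le_of_lt hite_deg (by omega))
    have hrc : r.coeff (k+1) = 0 := by
      rw [hr]
      simp only [Polynomial.coeff_sub, Polynomial.coeff_X_mul, Polynomial.coeff_smul, smul_eq_mul,
        hite_coeff]
      have h1 : (d k).coeff (k+1) = 0 :=
        Polynomial.coeff_eq_zero_of_natDegree_lt (lt_of_le_of_lt (hdeg k (by omega)) (by omega))
      have h2 : (d (k+1)).coeff (k+1) = g (k+1) := rfl
      rw [h1, h2, div_mul_cancel₀ _ hgpk1.ne']
      show g k - g k - α * 0 - 0 = 0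
      ring
    have hrdeg : r.natDegree ≤ k := by
      refine cd_deg_drop ?_ hrc
      rw [hr]
      refine le_trans (Polynomial.natDegree_sub_le _ _) ?_
      simp only [max_le_iff]
      refine ⟨le_trans (Polynomial.natDegree_sub_le _ _) ?_, by omega⟩
      simp only [max_le_iff]
      refine ⟨le_trans (Polynomial.natDegree_sub_le _ _) ?_,
        le_trans (Polynomial.natDegree_smul_le _ _) (le_trans (hdeg k (by omega)) (by omega))⟩
      simp only [max_le_iff]
      constructor
      · refine le_trans (Polynomial.natDegree_mul_le) ?_
        have := hdeg k (by omega)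
        simp only [Polynomial.natDegree_X]
        omega
      · exact le_trans (Polynomial.natDegree_smul_le _ _) (hdeg (k+1) hk)
    obtain ⟨e, he⟩ := hspan k (by omega) r hrdeg
    have hev : ∀ j ≤ k, cdL b (r * d j) = 0 := by
      intro j hj
      have hrj : cdL b (r * d j)
          = cdL b ((Polynomial.X * d j) * d k) - (g k / g (k+1)) * cdL b (d (k+1) * d j)
            - α * cdL b (d k * d j)
            - (if k = 0 then 0 else (g (k-1) / g k) * cdL b (d (k-1) * d j)) := by
        rw [hr]
        have hassoc : (Polynomial.X * d k) * d j = (Polynomial.X * d j) * d k := by ring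
        rw [sub_mul, sub_mul, sub_mul, map_sub, map_sub, map_sub, hassoc,
          smul_mul_assoc, _root_.map_smul, smul_eq_mul, smul_mul_assoc, _root_.map_smul,
          smul_eq_mul]
        congr 1
        split
        · simp
        · rw [smul_mul_assoc, _root_.map_smul, smul_eq_mul]
      have t2 : cdL b (d (k+1) * d j) = 0 := by
        rw [honor (k+1) hk j (by omega), if_neg (by omega)]
      rcases eq_or_lt_of_le hj with rfl | hjk
      · -- j = k
        have t1 : cdL b ((Polynomial.X * d j) * d j) = α := hα.symm
        have t3 : cdL b (d j * d j) = 1 := hone j (by omega)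
        rw [hrj, t1, t2, t3]
        split
        · ring
        · next h =>
          rw [honor (j-1) (by omega) j (by omega), if_neg (by omega)]
          ring
      · have hk1 : 1 ≤ k := by omega
        have t3 : cdL b (d k * d j) = 0 := by
          rw [honor k (by omega) j (by omega), if_neg (by omega)]
        rcases eq_or_lt_of_le (Nat.le_sub_one_of_lt hjk) with hj1 | hj2
        · -- j = k - 1
          have hkj : k = j+1 := by omega
          subst hkj
          simp only [Nat.add_sub_cancel] at *
          have t1 : cdL b ((Polynomial.X * d j) * d (j+1)) = g j / g (j+1) :=
            hXd j (by omega)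
          have t4 : cdL b (d j * d j) = 1 := hone j (by omega)
          rw [hrj, t1, t2, t3, if_neg (by omega), t4]
          ring
        · -- j < k - 1
          have t1 : cdL b ((Polynomial.X * d j) * d k) = 0 := by
            refine hortho k (by omega) _ ?_
            refine lt_of_le_of_lt (Polynomial.natDegree_mul_le) ?_
            have := hdeg j (by omega)
            simp only [Polynomial.natDegree_X]
            omega
          have t4 : cdL b (d (k-1) * d j) = 0 := by
            rw [honor (k-1) (by omega) j (by omega), if_neg (by omega)]
          rw [hrj, t1, t2, t3, if_neg (by omega), t4]
          ring
    have he0 : ∀ j ∈ Finset.range (k+1), e j • d j = 0 := by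
      intro j hj
      have hj' : j ≤ k := by have := Finset.mem_range.mp hj; omega
      have : e j = 0 := by
        rw [← hcoef k (by omega) e j hj', ← he, hev j hj']
      rw [this, zero_smul]
    have hr0 : r = 0 := by rw [he, Finset.sum_congr rfl he0, Finset.sum_const_zero]
    rw [hr] at hr0
    linear_combination (norm := ring_nf) hr0
  -- evaluation of the recurrence
  have hev : ∀ (x : ℝ) (k : ℕ), k+1 ≤ m →
      x * (d k).eval x = (g k / g (k+1)) * (d (k+1)).eval x
        + (cdL b (Polynomial.X * d k * d k)) * (d k).eval x
        + (if k = 0 then 0 else (g (k-1) / g k) * (d (k-1)).eval x) := by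
    intro x k hk
    have h := congrArg (Polynomial.eval x) (hrec k hk)
    simp only [Polynomial.eval_mul, Polynomial.eval_X, Polynomial.eval_add,
      Polynomial.eval_smul, smul_eq_mul, apply_ite (Polynomial.eval x),
      Polynomial.eval_zero] at h
    exact h
  obtain ⟨n, rfl⟩ : ∃ n, m = n + 2 := ⟨m - 2, by omega⟩
  set T : ℕ → ℝ := fun k => (g k / g (k+1)) *
    ((d k).eval lam * (d (k+1)).eval mu - (d (k+1)).eval lam * (d k).eval mu) with hT
  have hstep : ∀ k : ℕ, k+1 ≤ n+2 →
      (mu - lam) * ((d k).eval lam * (d k).eval mu)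
        = T k - (if k = 0 then 0 else T (k-1)) := by
    intro k hk
    have h1 := hev mu k hk
    have h2 := hev lam k hk
    simp only [hT]
    by_cases hk0 : k = 0
    · subst hk0
      rw [if_pos rfl] at h1 h2 ⊢
      linear_combination (d 0).eval lam * h1 - (d 0).eval mu * h2
    · rw [if_neg hk0] at h1 h2 ⊢
      have hkk : k - 1 + 1 = k := by omega
      rw [hkk]
      linear_combination (d k).eval lam * h1 - (d k).eval mu * h2
  have hsum : (mu - lam) * ∑ k ∈ Finset.range (n+2), (d k).eval lam * (d k).eval mu
      = T (n+1) := by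
    rw [Finset.mul_sum]
    rw [Finset.sum_congr rfl fun k hk => hstep k (Finset.mem_range.mp hk)]
    exact cd_tele T (n+1)
  -- identification of β
  have hβT : β = g (n+1) / g (n+2) := by
    have h1 : 0 < Δ (n+2) := hΔpos _ (by omega)
    have h2 : 0 < Δ (n+1) := hΔpos _ (by omega)
    have h3 : 0 < Δ n := hΔpos _ (by omega)
    have e1 : g (n+1) = (1 / Real.sqrt (Δ (n+1) * Δ n)) * Δ n := hgS n (by omega)
    have e2 : g (n+2) = (1 / Real.sqrt (Δ (n+2) * Δ (n+1))) * Δ (n+1) := hgS (n+1) (by omega)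
    have hm1 : n + 2 - 1 = n + 1 := rfl
    have hm2 : n + 2 - 2 = n := rfl
    rw [hβ, hm1, hm2, e1, e2]
    rw [Real.sqrt_mul h1.le, Real.sqrt_mul h2.le]
    set s0 := Real.sqrt (Δ n) with hs0
    set s1 := Real.sqrt (Δ (n+1)) with hs1
    set s2 := Real.sqrt (Δ (n+2)) with hs2
    have p0 : 0 < s0 := Real.sqrt_pos.mpr h3
    have p1 : 0 < s1 := Real.sqrt_pos.mpr h2
    have p2 : 0 < s2 := Real.sqrt_pos.mpr h1
    have q0 : s0^2 = Δ n := Real.sq_sqrt h3.le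
    have q1 : s1^2 = Δ (n+1) := Real.sq_sqrt h2.le
    have q2 : s2^2 = Δ (n+2) := Real.sq_sqrt h1.le
    rw [← q0, ← q1, ← q2]
    field_simp
    ring
    rw [Real.sqrt_mul (by positivity), Real.sqrt_sq p2.le, Real.sqrt_sq p1.le]
  have hmulam : mu - lam ≠ 0 := sub_ne_zero.mpr (Ne.symm hne)
  have hm1 : n + 2 - 1 = n + 1 := rfl
  rw [hm1, hβT, div_eq_iff hmulam]
  have : T (n+1) = g (n+1) / g (n+1+1) *
      ((d (n+1)).eval lam * (d (n+2)).eval mu - (d (n+2)).eval lam * (d (n+1)).eval mu) := rfl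
  linear_combination -hsum
end

section
/- Let A₀₀ act on polynomials of degree ≤ m−1 by (A₀₀ q)(t) = t·q(t) − β_{m-1}⟨q, d_{m-1}⟩ d_m(t), where d_k are the orthonormal polynomials of a measure σ and β_{m-1} the recurrence coefficient. Then for z not a zero of d_m, the resolvent acts by ([A₀₀ − z]⁻¹ q)(t) = (1/(t−z))·[q(t) − (q(z)/d_m(z))·d_m(t)], i.e., applying A₀₀ − z to the right-hand side returns q. -/
open MeasureTheory Polynomial

theorem stmt19 (m : ℕ) (hm : 1 ≤ m) (μ : Measure ℝ)
    (hint : ∀ k ≤ 2 * m, Integrable (fun t : ℝ => t ^ k) μ)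
    (d : ℕ → Polynomial ℝ)
    (hdeg : ∀ k ≤ m, (d k).natDegree = k)
    (hlead : ∀ k ≤ m, 0 < (d k).leadingCoeff)
    (horth : ∀ j ≤ m, ∀ k ≤ m,
        (∫ t, (d j).eval t * (d k).eval t ∂μ) = if j = k then 1 else 0)
    (β : ℝ) (hβ : β = ∫ t, t * (d (m - 1)).eval t * (d m).eval t ∂μ)
    (z : ℂ) (hz : Polynomial.aeval z (d m) ≠ 0)
    (q : Polynomial ℂ) (hq : q.natDegree ≤ m - 1)
    (r : Polynomial ℂ)
    (hr : q - Polynomial.C (Polynomial.eval z q / Polynomial.aeval z (d m)) *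
            (d m).map (algebraMap ℝ ℂ)
          = (Polynomial.X - Polynomial.C z) * r) :
    Polynomial.X * r
      - Polynomial.C ((β : ℂ) *
          ∫ t, Polynomial.eval (t : ℂ) r * (((d (m - 1)).eval t : ℝ) : ℂ) ∂μ) *
        (d m).map (algebraMap ℝ ℂ)
      - Polynomial.C z * r = q := by
  -- integrability of polys of degree ≤ 2m
  have hip : ∀ p : Polynomial ℝ, p.natDegree ≤ 2 * m → Integrable (fun t => p.eval t) μ := by
    intro p hp
    have he : (fun t : ℝ => p.eval t) = fun t => ∑ j ∈ Finset.range (2*m+1), p.coeff j * t ^ j := by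
      funext t
      exact eval_eq_sum_range' (Nat.lt_succ_of_le hp) t
    rw [he]
    exact integrable_finset_sum _ fun j hj =>
      (hint j (Nat.lt_succ_iff.mp (Finset.mem_range.mp hj))).const_mul _
  -- key orthogonality computation
  have key : ∀ n : ℕ, ∀ p : Polynomial ℝ, p.natDegree ≤ n → ∀ k, k ≤ m → p.natDegree ≤ k →
      ∫ t, p.eval t * (d k).eval t ∂μ = p.coeff k / (d k).leadingCoeff := by
    intro n
    induction n using Nat.strong_induction_on with
    | _ n ih =>
      intro p hpn k hk hpk
      by_cases hp0 : p = 0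
      · simp [hp0]
      set j := p.natDegree with hj
      have hjm : j ≤ m := le_trans hpk hk
      have hdj : (d j).natDegree = j := hdeg j hjm
      have hdk : (d k).natDegree = k := hdeg k hk
      have hlj : (d j).leadingCoeff ≠ 0 := ne_of_gt (hlead j hjm)
      set c := p.coeff j / (d j).leadingCoeff with hc
      set p' := p - C c * d j with hp'
      have hcoe : ∀ i, p.coeff i = p'.coeff i + c * (d j).coeff i := by
        intro i; simp only [hp', coeff_sub, coeff_C_mul]; ring
      have hp'j : p'.coeff j = 0 := by
        have hlc : (d j).coeff j = (d j).leadingCoeff := by rw [leadingCoeff, hdj]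
        simp only [hp', coeff_sub, coeff_C_mul, hlc, hc]
        field_simp
        ring
      have hp'le : p'.natDegree ≤ j :=
        (natDegree_sub_le _ _).trans (max_le le_rfl (natDegree_mul_le.trans (by simp [hdj])))
      have i1 : Integrable (fun t => p'.eval t * (d k).eval t) μ := by
        have := hip (p' * d k) (natDegree_mul_le.trans (by omega))
        simpa [eval_mul] using this
      have i2 : Integrable (fun t => (d j).eval t * (d k).eval t) μ := by
        have := hip (d j * d k) (natDegree_mul_le.trans (by omega))
        simpa [eval_mul] using this
      have hsplit : ∫ t, p.eval t * (d k).eval t ∂μ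
          = (∫ t, p'.eval t * (d k).eval t ∂μ) + c * ∫ t, (d j).eval t * (d k).eval t ∂μ := by
        rw [show (fun t => p.eval t * (d k).eval t)
            = fun t => p'.eval t * (d k).eval t + c * ((d j).eval t * (d k).eval t) from
          funext fun t => by simp [hp']; ring]
        rw [integral_add i1 (i2.const_mul c), integral_const_mul]
      have hIp' : ∫ t, p'.eval t * (d k).eval t ∂μ = p'.coeff k / (d k).leadingCoeff := by
        by_cases hp'0 : p' = 0
        · simp [hp'0]
        · have hlt : p'.natDegree < j := by
            rcases lt_or_eq_of_le hp'le with h | h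
            · exact h
            · exact absurd (show p'.leadingCoeff = 0 by rw [leadingCoeff, h]; exact hp'j)
                (leadingCoeff_ne_zero.mpr hp'0)
          exact ih p'.natDegree (lt_of_lt_of_le hlt hpn) p' le_rfl k hk (le_trans hlt.le hpk)
      rw [hsplit, hIp', horth j hjm k hk, hcoe k]
      rcases lt_or_eq_of_le hpk with hlt | heq
      · have hdjk : (d j).coeff k = 0 := coeff_eq_zero_of_natDegree_lt (by omega)
        rw [if_neg (by omega), hdjk]
        ring
      · have hlk : (d k).leadingCoeff ≠ 0 := ne_of_gt (hlead k hk)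
        have h0 : p'.coeff k = 0 := heq ▸ hp'j
        have hck : (d k).coeff k = (d k).leadingCoeff := by rw [leadingCoeff, hdk]
        rw [if_pos heq, h0, heq, hck]
        field_simp
  -- replace m by n + 1
  obtain ⟨n, rfl⟩ : ∃ n, m = n + 1 := ⟨m - 1, by omega⟩
  simp only [Nat.add_sub_cancel] at hβ hq ⊢
  set c := Polynomial.eval z q / Polynomial.aeval z (d (n+1)) with hcdef
  set D := (d (n+1)).map (algebraMap ℝ ℂ) with hD
  have hDdeg : D.natDegree = n + 1 := by
    rw [hD, natDegree_map_eq_of_injective (algebraMap ℝ ℂ).injective, hdeg (n+1) le_rfl]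
  have hlc1 : (d n).leadingCoeff ≠ 0 := ne_of_gt (hlead n (by omega))
  have hlcm : (d (n+1)).leadingCoeff ≠ 0 := ne_of_gt (hlead (n+1) le_rfl)
  -- value of β
  have hd1 : (d n).natDegree = n := hdeg n (by omega)
  have hd1ne : d n ≠ 0 := leadingCoeff_ne_zero.mp hlc1
  have hXd : (X * d n : Polynomial ℝ).natDegree = n + 1 := by
    rw [natDegree_mul X_ne_zero hd1ne, natDegree_X, hd1]
    omega
  have hβval : β = (d n).leadingCoeff / (d (n+1)).leadingCoeff := by
    rw [hβ]
    have e : (fun t : ℝ => t * (d n).eval t * (d (n+1)).eval t)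
        = fun t => (X * d n : Polynomial ℝ).eval t * (d (n+1)).eval t := by
      funext t; simp [eval_mul]
    have hcn : (d n).coeff n = (d n).leadingCoeff := by rw [leadingCoeff, hd1]
    rw [e, key (n+1) (X * d n) (le_of_eq hXd) (n+1) le_rfl (le_of_eq hXd), coeff_X_mul, hcn]
  -- moments
  have hM : ∀ j, j < n + 1 → ∫ t, t ^ j * (d n).eval t ∂μ
      = if j = n then 1 / (d n).leadingCoeff else 0 := by
    intro j hj
    have e : (fun t : ℝ => t ^ j * (d n).eval t) = fun t => (X ^ j : Polynomial ℝ).eval t * (d n).eval t := by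
      funext t; simp
    have hdegX : (X ^ j : Polynomial ℝ).natDegree = j := natDegree_X_pow j
    rw [e, key j (X ^ j) (le_of_eq hdegX) n (by omega) (by omega), coeff_X_pow]
    by_cases h : j = n
    · simp [h]
    · rw [if_neg (fun hh => h hh.symm), if_neg h, zero_div]
  by_cases hr0 : r = 0
  · have hqD : q = C c * D := by rwa [hr0, mul_zero, sub_eq_zero] at hr
    have hc0 : c = 0 := by
      by_contra hc0
      have : q.natDegree = n + 1 := by rw [hqD, natDegree_C_mul hc0, hDdeg]
      omega
    have hq0 : q = 0 := by rw [hqD, hc0, map_zero, zero_mul]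
    simp [hr0, hq0]
  -- r ≠ 0
  have hrdeg : r.natDegree ≤ n := by
    have h1 : ((X - C z) * r).natDegree = 1 + r.natDegree := by
      rw [natDegree_mul (X_sub_C_ne_zero z) hr0, natDegree_X_sub_C]
    have h2 : (q - C c * D).natDegree ≤ n + 1 :=
      (natDegree_sub_le _ _).trans (max_le (by omega) (natDegree_mul_le.trans (by simp [hDdeg])))
    rw [hr] at h2
    omega
  have hrm : r.coeff (n+1) = 0 := coeff_eq_zero_of_natDegree_lt (by omega)
  have hqm : q.coeff (n+1) = 0 := coeff_eq_zero_of_natDegree_lt (by omega)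
  have hlcme : (d (n+1)).coeff (n+1) = (d (n+1)).leadingCoeff := by
    rw [leadingCoeff, hdeg (n+1) le_rfl]
  have hrc : r.coeff n = -(c * ((d (n+1)).leadingCoeff : ℂ)) := by
    have h3 := congrArg (fun p : Polynomial ℂ => p.coeff (n+1)) hr
    simp only [coeff_sub, coeff_C_mul, sub_mul, coeff_X_mul, hD, coeff_map] at h3
    rw [hqm, hrm, hlcme] at h3
    have : algebraMap ℝ ℂ (d (n+1)).leadingCoeff = ((d (n+1)).leadingCoeff : ℂ) := rfl
    rw [this] at h3
    linear_combination -h3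
  -- the complex integral
  have hIval : (∫ t, Polynomial.eval (t : ℂ) r * (((d n).eval t : ℝ) : ℂ) ∂μ)
      = r.coeff n * ((1 / (d n).leadingCoeff : ℝ) : ℂ) := by
    have hev : ∀ t : ℝ, Polynomial.eval (t : ℂ) r * (((d n).eval t : ℝ) : ℂ)
        = ∑ j ∈ Finset.range (n+1), r.coeff j * (((t ^ j * (d n).eval t : ℝ)) : ℂ) := by
      intro t
      rw [eval_eq_sum_range' (show r.natDegree < n + 1 by omega), Finset.sum_mul]
      refine Finset.sum_congr rfl fun j hj => ?_
      push_cast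
      ring
    have hint2 : ∀ j ∈ Finset.range (n+1),
        Integrable (fun t : ℝ => r.coeff j * (((t ^ j * (d n).eval t : ℝ)) : ℂ)) μ := by
      intro j hj
      have hji : Integrable (fun t : ℝ => t ^ j * (d n).eval t) μ := by
        have := hip (X ^ j * d n)
          (natDegree_mul_le.trans (by rw [natDegree_X_pow, hd1]; simp at hj; omega))
        simpa [eval_mul] using this
      exact hji.ofReal.const_mul _
    calc (∫ t, Polynomial.eval (t : ℂ) r * (((d n).eval t : ℝ) : ℂ) ∂μ)
        = ∫ t, ∑ j ∈ Finset.range (n+1), r.coeff j * (((t ^ j * (d n).eval t : ℝ)) : ℂ) ∂μ := by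
          congr 1; funext t; exact hev t
      _ = ∑ j ∈ Finset.range (n+1), ∫ t, r.coeff j * (((t ^ j * (d n).eval t : ℝ)) : ℂ) ∂μ :=
          integral_finset_sum _ hint2
      _ = ∑ j ∈ Finset.range (n+1), r.coeff j * ((∫ t, t ^ j * (d n).eval t ∂μ : ℝ) : ℂ) := by
          refine Finset.sum_congr rfl fun j hj => ?_
          rw [integral_const_mul]
          congr 1
          exact integral_ofReal
      _ = r.coeff n * ((1 / (d n).leadingCoeff : ℝ) : ℂ) := by
          rw [Finset.sum_eq_single n]
          · rw [hM n (by omega), if_pos rfl]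
          · intro j hj hne
            rw [hM j (Finset.mem_range.mp hj), if_neg hne]
            simp
          · intro h
            exact absurd (Finset.self_mem_range_succ n) h
  have hfin : (β : ℂ) * (∫ t, Polynomial.eval (t : ℂ) r * (((d n).eval t : ℝ) : ℂ) ∂μ) = -c := by
    rw [hIval, hβval, hrc]
    have h1 : ((d n).leadingCoeff : ℂ) ≠ 0 := by exact_mod_cast hlc1
    have h2 : ((d (n+1)).leadingCoeff : ℂ) ≠ 0 := by exact_mod_cast hlcm
    push_cast
    field_simp
  rw [hfin, map_neg, neg_mul, sub_neg_eq_add]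
  linear_combination -hr
end
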